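/- The normalized partition function x^{−δ}·Z_λ(x|a), where x^δ = x_1^0 x_2^1 ⋯ x_n^{n−1}, is a symmetric function of x_1,…,x_n. -/

import Mathlib

/-- Exactly two of the four Booleans are `true` (the six-vertex/ice admissibility condition). -/
abbrev ExactlyTwo (a b c d : Bool) : Prop :=
  ((cond a 1 0) + (cond b 1 0) + (cond c 1 0) + (cond d 1 0) : ℕ) = 2

/-- Boltzmann weight of a rectilinear vertex on a row with parameter `x` in a column with
parameter `a`; `W N E S` record the presence of a hydrogen atom at the west, north, east,
south positions adjacent to the vertex.  The vertical molecule gets `x/a`, the molecule with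
hydrogens north and west gets `x/a - 1`, the other admissible molecules get `1`, and
inadmissible configurations get `0`. -/
noncomputable def rectWeight {K : Type*} [Field K] (x a : K) (W N E S : Bool) : K :=
  if W = true ∧ N = true ∧ E = false ∧ S = false then x / a - 1
  else if N = true ∧ S = true ∧ W = false ∧ E = false then x / a
  else if ExactlyTwo W N E S then 1 else 0

/-- A (pre-)state of the six-vertex model on an `n × m` grid of vertices: `s.1 i j = true`
iff the hydrogen of the horizontal edge west of the vertex in row `i`, column `j` sits at its
east end (`j = 0` and `j = m` are the boundary half-edges), and `s.2 i j = true` iff the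
hydrogen of the vertical edge north of the vertex in row `i`, column `j` sits at its south
end (`i = 0` and `i = n` are the boundary half-edges). -/
abbrev IceState (n m : ℕ) := (Fin n → Fin (m + 1) → Bool) × (Fin (n + 1) → Fin m → Bool)

/-- Hydrogen adjacent to the west of vertex `(i,j)`. -/
def occW {n m : ℕ} (s : IceState n m) (i : Fin n) (j : Fin m) : Bool := s.1 i j.castSucc
/-- Hydrogen adjacent to the east of vertex `(i,j)`. -/
def occE {n m : ℕ} (s : IceState n m) (i : Fin n) (j : Fin m) : Bool := !(s.1 i j.succ)
/-- Hydrogen adjacent to the north of vertex `(i,j)`. -/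
def occN {n m : ℕ} (s : IceState n m) (i : Fin n) (j : Fin m) : Bool := s.2 i.castSucc j
/-- Hydrogen adjacent to the south of vertex `(i,j)`. -/
def occS {n m : ℕ} (s : IceState n m) (i : Fin n) (j : Fin m) : Bool := !(s.2 i.succ j)

/-- Admissibility and the `λ`-boundary conditions: every vertex has exactly two adjacent
hydrogens; the left and right boundaries are filled with hydrogens; the lower boundary is
devoid of hydrogens; and the top boundary has hydrogens exactly away from the (`1`-based)
columns `λ_i + n + 1 - i`. -/
abbrev IsAdmissible (n m : ℕ) (lam : Fin n → ℕ) (s : IceState n m) : Prop :=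
  (∀ (i : Fin n) (j : Fin m), ExactlyTwo (occW s i j) (occN s i j) (occE s i j) (occS s i j)) ∧
  (∀ i : Fin n, s.1 i 0 = true) ∧
  (∀ i : Fin n, s.1 i (Fin.last m) = false) ∧
  (∀ j : Fin m, s.2 (Fin.last n) j = true) ∧
  (∀ j : Fin m, s.2 0 j = true ↔ ∀ i : Fin n, (j : ℕ) + 1 ≠ lam i + (n - (i : ℕ)))

/-- Generalized six-vertex partition function with `λ`-boundary conditions: the sum over all
admissible states of the product over all vertices of an arbitrary local weight `w`,
depending on the row, the column, and the local configuration `W N E S` of hydrogens. -/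
noncomputable def ZPFgen (n m : ℕ) (lam : Fin n → ℕ) {R : Type*} [CommRing R]
    (w : Fin n → Fin m → Bool → Bool → Bool → Bool → R) : R :=
  ∑ s ∈ Finset.univ.filter (IsAdmissible n m lam),
    ∏ i : Fin n, ∏ j : Fin m, w i j (occW s i j) (occN s i j) (occE s i j) (occS s i j)

/-- The six-vertex partition function `Z_λ(x|a)` with `λ`-boundary conditions and Boltzmann
weights `x_i/a_j` (vertical molecule), `x_i/a_j - 1` (hydrogens north and west), `1`
(otherwise), on an `n × m` grid (columns `1`-based: column `j : Fin m` has parameter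
`a (j+1)`). -/
noncomputable def ZPF (n m : ℕ) (lam : Fin n → ℕ) {K : Type*} [Field K]
    (x : Fin n → K) (a : ℤ → K) : K :=
  ZPFgen n m lam (fun i j W N E S => rectWeight (x i) (a ((j : ℤ) + 1)) W N E S)

section Aux

variable {K : Type*} [Field K]

lemma rectWeight_eq_zero {x a : K} {W N E S : Bool} (h : ¬ ExactlyTwo W N E S) :
    rectWeight x a W N E S = 0 := by
  unfold rectWeight
  rw [if_neg, if_neg, if_neg h]
  · rintro ⟨h1, h2, h3, h4⟩; subst h1 h2 h3 h4; exact h rfl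
  · rintro ⟨h1, h2, h3, h4⟩; subst h1 h2 h3 h4; exact h rfl

/-- local 2×2 transfer matrix of a single vertex. -/
noncomputable def Lr (u α : K) (t s : Bool) : Matrix Bool Bool K :=
  fun p p' => rectWeight u α p t (!p') (!s)

/-- row transfer matrix. -/
noncomputable def RWm (m : ℕ) (u : K) (α : Fin m → K) :
    Matrix (Fin m → Bool) (Fin m → Bool) K :=
  fun v b => ((List.ofFn fun j => Lr u (α j) (v j) (b j)).prod) true false

lemma chain_eq_prod {S : Type*} [Fintype S] [DecidableEq S] {R : Type*} [CommRing R] :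
    ∀ (m : ℕ) (M : Fin m → Matrix S S R) (s t : S),
    (List.ofFn M).prod s t =
      ∑ p : Fin (m + 1) → S,
        if p 0 = s ∧ p (Fin.last m) = t then
          ∏ j, M j (p j.castSucc) (p j.succ) else 0 := by
  intro m
  induction m with
  | zero =>
    intro M s t
    rw [List.ofFn_zero, List.prod_nil]
    simp only [Finset.univ_eq_empty (α := Fin 0), Finset.prod_empty]
    by_cases hst : s = t
    · subst hst
      rw [Matrix.one_apply_eq, Finset.sum_eq_single (fun _ => s)]
      · simp
      · intro p _ hne
        rw [if_neg]
        rintro ⟨h1, _⟩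
        apply hne
        funext i
        have hi : i = 0 := by omega
        rw [hi, h1]
      · intro h; exact absurd (Finset.mem_univ _) h
    · rw [Matrix.one_apply_ne hst]
      refine (Finset.sum_eq_zero fun p _ => ?_).symm
      rw [if_neg]
      rintro ⟨h1, h2⟩
      exact hst (by have h0 : (Fin.last 0) = (0 : Fin 1) := rfl
                    rw [← h1, ← h0, h2])
  | succ m ih =>
    intro M s t
    rw [List.ofFn_succ, List.prod_cons, Matrix.mul_apply]
    have hpt : ∀ (y : S) (q : Fin (m + 1) → S),
        (if @Fin.cons (m + 1) (fun _ => S) y q 0 = s ∧ @Fin.cons (m + 1) (fun _ => S) y q (Fin.last (m + 1)) = t then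
          ∏ j, M j (@Fin.cons (m + 1) (fun _ => S) y q j.castSucc) (@Fin.cons (m + 1) (fun _ => S) y q j.succ) else 0)
        = if y = s ∧ q (Fin.last m) = t then
            M 0 y (q 0) * ∏ j : Fin m, M j.succ (q j.castSucc) (q j.succ) else 0 := by
      intro y q
      have h1 : @Fin.cons (m + 1) (fun _ => S) y q (Fin.last (m + 1)) = q (Fin.last m) := by
        rw [← Fin.succ_last, Fin.cons_succ]
      have h2 : (∏ j, M j (@Fin.cons (m + 1) (fun _ => S) y q j.castSucc) (@Fin.cons (m + 1) (fun _ => S) y q j.succ)) =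
          M 0 y (q 0) * ∏ j : Fin m, M j.succ (q j.castSucc) (q j.succ) := by
        rw [Fin.prod_univ_succ]
        refine congrArg₂ (· * ·) ?_ (Finset.prod_congr rfl fun j _ => ?_)
        · simp
        · rw [← Fin.succ_castSucc, Fin.cons_succ, Fin.cons_succ]
      rw [Fin.cons_zero, h1, h2]
    calc (∑ k, M 0 s k * ((List.ofFn fun i => M i.succ).prod) k t)
        = ∑ k, ∑ q : Fin (m + 1) → S, if q 0 = k ∧ q (Fin.last m) = t then
            M 0 s k * ∏ j : Fin m, M j.succ (q j.castSucc) (q j.succ) else 0 := by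
          refine Finset.sum_congr rfl fun k _ => ?_
          rw [ih _ k t, Finset.mul_sum]
          refine Finset.sum_congr rfl fun q _ => ?_
          rw [mul_ite, mul_zero]
      _ = ∑ q : Fin (m + 1) → S, ∑ k, if q 0 = k ∧ q (Fin.last m) = t then
            M 0 s k * ∏ j : Fin m, M j.succ (q j.castSucc) (q j.succ) else 0 :=
          Finset.sum_comm
      _ = ∑ q : Fin (m + 1) → S, (if q (Fin.last m) = t then
            M 0 s (q 0) * ∏ j : Fin m, M j.succ (q j.castSucc) (q j.succ) else 0) := by
          refine Finset.sum_congr rfl fun q _ => ?_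
          by_cases hC : q (Fin.last m) = t
          · simp only [hC, and_true]
            rw [Finset.sum_ite_eq Finset.univ (q 0)
              (fun k => M 0 s k * ∏ j : Fin m, M j.succ (q j.castSucc) (q j.succ))]
            simp
          · simp [hC]
      _ = ∑ y : S, ∑ q : Fin (m + 1) → S, if y = s ∧ q (Fin.last m) = t then
            M 0 y (q 0) * ∏ j : Fin m, M j.succ (q j.castSucc) (q j.succ) else 0 := by
          rw [Finset.sum_comm]
          refine Finset.sum_congr rfl fun q _ => ?_
          by_cases hC : q (Fin.last m) = t
          · simp only [hC, and_true]
            rw [Finset.sum_ite_eq' Finset.univ s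
              (fun y => M 0 y (q 0) * ∏ j : Fin m, M j.succ (q j.castSucc) (q j.succ))]
            simp
          · simp [hC]
      _ = ∑ p : Fin (m + 2) → S, if p 0 = s ∧ p (Fin.last (m + 1)) = t then
            ∏ j, M j (p j.castSucc) (p j.succ) else 0 := by
          rw [← Equiv.sum_comp (Fin.consEquiv (fun _ : Fin (m + 2) => S)),
            Fintype.sum_prod_type]
          exact Finset.sum_congr rfl fun y _ =>
            Finset.sum_congr rfl fun q _ => (hpt y q).symm

end Aux
section Aux2

variable {K : Type*} [Field K]

lemma ite_forall_prod {ι : Type*} [Fintype ι] {R : Type*} [CommRing R]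
    (P : ι → Prop) [DecidablePred P] [Decidable (∀ i, P i)] (g : ι → R) :
    (if (∀ i, P i) then ∏ i, g i else 0) = ∏ i, if P i then g i else 0 := by
  by_cases h : ∀ i, P i
  · rw [if_pos h]; exact Finset.prod_congr rfl fun i _ => (if_pos (h i)).symm
  · rw [if_neg h]; push_neg at h; obtain ⟨i, hi⟩ := h
    refine (Finset.prod_eq_zero (Finset.mem_univ i) ?_).symm
    exact if_neg hi

lemma bool_eq_decide (b : Bool) (Q : Prop) [Decidable Q] :
    b = decide Q ↔ (b = true ↔ Q) := by
  by_cases hQ : Q <;> simp [hQ]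

set_option maxHeartbeats 2000000 in
lemma ZPF_eq (n m : ℕ) (lam : Fin n → ℕ) (x : Fin n → K) (a : ℤ → K) :
    ZPF n m lam x a =
      ((List.ofFn fun i => RWm m (x i) (fun j => a ((j : ℤ) + 1))).prod)
        (fun j => decide (∀ i : Fin n, (j : ℕ) + 1 ≠ lam i + (n - (i : ℕ))))
        (fun _ => true) := by
  classical
  set α : Fin m → K := fun j => a ((j : ℤ) + 1) with hα
  set Q : Fin m → Prop := fun j => ∀ i : Fin n, (j : ℕ) + 1 ≠ lam i + (n - (i : ℕ)) with hQ
  -- the weight of state s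
  set P : IceState n m → K := fun s =>
    ∏ i : Fin n, ∏ j : Fin m,
      rectWeight (x i) (α j) (occW s i j) (occN s i j) (occE s i j) (occS s i j) with hP
  set Bdry : IceState n m → Prop := fun s =>
    (∀ i : Fin n, s.1 i 0 = true) ∧ (∀ i : Fin n, s.1 i (Fin.last m) = false) ∧
    (∀ j : Fin m, s.2 (Fin.last n) j = true) ∧
    (∀ j : Fin m, s.2 0 j = true ↔ Q j) with hB
  have step0 : ZPF n m lam x a = ∑ s : IceState n m, if Bdry s then P s else 0 := by
    unfold ZPF ZPFgen
    rw [Finset.sum_filter]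
    refine Finset.sum_congr rfl fun s _ => ?_
    by_cases hBs : Bdry s
    · by_cases hET : ∀ (i : Fin n) (j : Fin m),
        ExactlyTwo (occW s i j) (occN s i j) (occE s i j) (occS s i j)
      · rw [if_pos ⟨hET, hBs.1, hBs.2.1, hBs.2.2.1, hBs.2.2.2⟩, if_pos hBs]
      · rw [if_neg (fun h => hET h.1), if_pos hBs]
        push_neg at hET
        obtain ⟨i, j, hij⟩ := hET
        exact (Finset.prod_eq_zero (Finset.mem_univ i)
          (Finset.prod_eq_zero (Finset.mem_univ j) (rectWeight_eq_zero hij))).symm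
    · rw [if_neg (fun h => hBs ⟨h.2.1, h.2.2.1, h.2.2.2.1, h.2.2.2.2⟩),
        if_neg hBs]
  rw [step0]
  -- split the state into horizontal and vertical parts
  rw [Fintype.sum_prod_type]
  rw [Finset.sum_comm]
  -- rewrite each inner sum over horizontal configurations as a product of row transfer entries
  have inner : ∀ v : Fin (n + 1) → Fin m → Bool,
      (∑ h : Fin n → Fin (m + 1) → Bool, if Bdry (h, v) then P (h, v) else 0) =
      if (∀ j : Fin m, v (Fin.last n) j = true) ∧ (∀ j : Fin m, v 0 j = true ↔ Q j) then
        ∏ i : Fin n, RWm m (x i) α (v i.castSucc) (v i.succ) else 0 := by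
    intro v
    by_cases hv : (∀ j : Fin m, v (Fin.last n) j = true) ∧ (∀ j : Fin m, v 0 j = true ↔ Q j)
    · rw [if_pos hv]
      have hsplit : ∀ h : Fin n → Fin (m + 1) → Bool,
          (if Bdry (h, v) then P (h, v) else 0) =
          if ∀ i : Fin n, (h i 0 = true ∧ h i (Fin.last m) = false) then P (h, v) else 0 := by
        intro h
        have : Bdry (h, v) ↔ ∀ i : Fin n, (h i 0 = true ∧ h i (Fin.last m) = false) := by
          rw [hB]
          constructor
          · rintro ⟨h1, h2, _, _⟩ i; exact ⟨h1 i, h2 i⟩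
          · intro hh; exact ⟨fun i => (hh i).1, fun i => (hh i).2, hv.1, hv.2⟩
        rw [if_congr this rfl rfl]
      rw [Finset.sum_congr rfl fun h _ => hsplit h]
      have hrow : ∀ (h : Fin n → Fin (m + 1) → Bool),
          P (h, v) = ∏ i : Fin n, ∏ j : Fin m,
            rectWeight (x i) (α j) (h i j.castSucc) (v i.castSucc j)
              (!(h i j.succ)) (!(v i.succ j)) := fun h => rfl
      calc ∑ h : Fin n → Fin (m + 1) → Bool,
            (if ∀ i : Fin n, (h i 0 = true ∧ h i (Fin.last m) = false) then P (h, v) else 0)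
          = ∑ h : Fin n → Fin (m + 1) → Bool, ∏ i : Fin n,
              (if h i 0 = true ∧ h i (Fin.last m) = false then
                ∏ j : Fin m, rectWeight (x i) (α j) (h i j.castSucc) (v i.castSucc j)
                  (!(h i j.succ)) (!(v i.succ j)) else 0) := by
            refine Finset.sum_congr rfl fun h _ => ?_
            rw [hrow h]
            exact ite_forall_prod (fun i => h i 0 = true ∧ h i (Fin.last m) = false)
              (fun i => ∏ j : Fin m, rectWeight (x i) (α j) (h i j.castSucc)
                (v i.castSucc j) (!(h i j.succ)) (!(v i.succ j)))
        _ = ∏ i : Fin n, ∑ g : Fin (m + 1) → Bool,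
              (if g 0 = true ∧ g (Fin.last m) = false then
                ∏ j : Fin m, rectWeight (x i) (α j) (g j.castSucc) (v i.castSucc j)
                  (!(g j.succ)) (!(v i.succ j)) else 0) :=
            (Fintype.prod_sum (fun (i : Fin n) (g : Fin (m + 1) → Bool) =>
              if g 0 = true ∧ g (Fin.last m) = false then
                ∏ j : Fin m, rectWeight (x i) (α j) (g j.castSucc) (v i.castSucc j)
                  (!(g j.succ)) (!(v i.succ j)) else 0)).symm
        _ = ∏ i : Fin n, RWm m (x i) α (v i.castSucc) (v i.succ) := by
            refine Finset.prod_congr rfl fun i _ => ?_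
            rw [RWm, chain_eq_prod m (fun j => Lr (x i) (α j) (v i.castSucc j) (v i.succ j))
              true false]
            rfl
    · rw [if_neg hv]
      refine Finset.sum_eq_zero fun h _ => ?_
      rw [if_neg]
      rw [hB]
      rintro ⟨_, _, h3, h4⟩
      exact hv ⟨h3, h4⟩
  rw [Finset.sum_congr rfl fun v _ => inner v]
  rw [chain_eq_prod n (fun i => RWm m (x i) α) _ _]
  refine Finset.sum_congr rfl fun v _ => ?_
  refine if_congr ?_ rfl rfl
  rw [and_comm]
  constructor
  · rintro ⟨h1, h2⟩
    exact ⟨funext fun j => (bool_eq_decide _ _).mpr (h1 j), funext fun j => h2 j⟩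
  · rintro ⟨h1, h2⟩
    exact ⟨fun j => (bool_eq_decide _ _).mp (congrFun h1 j), fun j => congrFun h2 j⟩

end Aux2
section Aux3

variable {K : Type*} [Field K]

/-- two-row column transfer matrix: top row parameter `u`, bottom `w`, column parameter `α`,
north occupancy `t`, bottom vertical-edge value `b`. -/
noncomputable def LLm (u w α : K) (t b : Bool) : Matrix (Bool × Bool) (Bool × Bool) K :=
  fun pq pq' => ∑ c : Bool, Lr u α t c pq.1 pq'.1 * Lr w α c b pq.2 pq'.2

/-- the `R`-matrix intertwining the two-row transfer matrices. -/
noncomputable def Rmat (u w : K) : Matrix (Bool × Bool) (Bool × Bool) K :=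
  fun p q =>
    if p = q then (if p.1 then u else w)
    else if p = (true, false) ∧ q = (false, true) then w - u else 0

set_option maxHeartbeats 4000000 in
lemma RLL (u w α : K) (t b : Bool) :
    Rmat u w * LLm u w α t b = LLm w u α t b * Rmat u w := by
  ext ⟨p, q⟩ ⟨p', q'⟩
  cases p <;> cases q <;> cases p' <;> cases q' <;> cases t <;> cases b <;>
    simp only [Matrix.mul_apply, Fintype.sum_prod_type, Fintype.sum_bool, LLm, Lr, Rmat,
        rectWeight, ExactlyTwo] <;>
    norm_num <;>
    ring_nf
end Aux3
section Aux4

variable {K : Type*} [Field K]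

lemma ite_sum_zero {R : Type*} [CommRing R] {c : Prop} [Decidable c] {ι : Type*}
    (s : Finset ι) (f : ι → R) :
    (if c then ∑ x ∈ s, f x else 0) = ∑ x ∈ s, if c then f x else 0 := by
  split
  · rfl
  · simp

lemma fusion (m : ℕ) (u w : K) (α : Fin m → K) (v b : Fin m → Bool) :
    (RWm m u α * RWm m w α) v b =
      ((List.ofFn fun j => LLm u w (α j) (v j) (b j)).prod) (true, true) (false, false) := by
  classical
  rw [chain_eq_prod m (fun j => LLm u w (α j) (v j) (b j)) (true, true) (false, false)]
  -- expand the LL product into a sum over middle vertical configurations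
  have hLL : ∀ r : Fin (m + 1) → Bool × Bool,
      (∏ j : Fin m, LLm u w (α j) (v j) (b j) (r j.castSucc) (r j.succ)) =
      ∑ mid : Fin m → Bool,
        (∏ j : Fin m, Lr u (α j) (v j) (mid j) (r j.castSucc).1 (r j.succ).1) *
        (∏ j : Fin m, Lr w (α j) (mid j) (b j) (r j.castSucc).2 (r j.succ).2) := by
    intro r
    rw [show (∏ j : Fin m, LLm u w (α j) (v j) (b j) (r j.castSucc) (r j.succ)) =
        ∏ j : Fin m, ∑ c : Bool, Lr u (α j) (v j) c (r j.castSucc).1 (r j.succ).1 *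
          Lr w (α j) c (b j) (r j.castSucc).2 (r j.succ).2 from rfl]
    rw [Fintype.prod_sum (fun (j : Fin m) (c : Bool) =>
      Lr u (α j) (v j) c (r j.castSucc).1 (r j.succ).1 *
        Lr w (α j) c (b j) (r j.castSucc).2 (r j.succ).2)]
    exact Finset.sum_congr rfl fun mid _ => Finset.prod_mul_distrib
  calc (RWm m u α * RWm m w α) v b
      = ∑ mid : Fin m → Bool, ∑ p : Fin (m + 1) → Bool, ∑ q : Fin (m + 1) → Bool,
          if (p 0 = true ∧ p (Fin.last m) = false) ∧ (q 0 = true ∧ q (Fin.last m) = false) then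
            (∏ j : Fin m, Lr u (α j) (v j) (mid j) (p j.castSucc) (p j.succ)) *
            (∏ j : Fin m, Lr w (α j) (mid j) (b j) (q j.castSucc) (q j.succ)) else 0 := by
        rw [Matrix.mul_apply]
        refine Finset.sum_congr rfl fun mid _ => ?_
        rw [show RWm m u α v mid =
          ((List.ofFn fun j => Lr u (α j) (v j) (mid j)).prod) true false from rfl]
        rw [show RWm m w α mid b =
          ((List.ofFn fun j => Lr w (α j) (mid j) (b j)).prod) true false from rfl]
        rw [chain_eq_prod m (fun j => Lr u (α j) (v j) (mid j)) true false,
          chain_eq_prod m (fun j => Lr w (α j) (mid j) (b j)) true false,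
          Finset.sum_mul_sum]
        refine Finset.sum_congr rfl fun p _ => Finset.sum_congr rfl fun q _ => ?_
        rw [ite_zero_mul_ite_zero]
    _ = ∑ mid : Fin m → Bool, ∑ r : Fin (m + 1) → Bool × Bool,
          if r 0 = (true, true) ∧ r (Fin.last m) = (false, false) then
            (∏ j : Fin m, Lr u (α j) (v j) (mid j) (r j.castSucc).1 (r j.succ).1) *
            (∏ j : Fin m, Lr w (α j) (mid j) (b j) (r j.castSucc).2 (r j.succ).2) else 0 := by
        refine Finset.sum_congr rfl fun mid _ => ?_
        rw [← Equiv.sum_comp (Equiv.arrowProdEquivProdArrow (Fin (m + 1)) (fun _ => Bool) (fun _ => Bool)).symm,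
          Fintype.sum_prod_type]
        refine Finset.sum_congr rfl fun p _ => Finset.sum_congr rfl fun q _ => ?_
        refine if_congr ?_ rfl rfl
        rw [Prod.ext_iff, Prod.ext_iff]
        constructor
        · rintro ⟨⟨a1, a2⟩, ⟨b1, b2⟩⟩; exact ⟨⟨a1, b1⟩, a2, b2⟩
        · rintro ⟨⟨a1, b1⟩, a2, b2⟩; exact ⟨⟨a1, a2⟩, b1, b2⟩
    _ = ∑ r : Fin (m + 1) → Bool × Bool,
          if r 0 = (true, true) ∧ r (Fin.last m) = (false, false) then
            ∏ j : Fin m, LLm u w (α j) (v j) (b j) (r j.castSucc) (r j.succ) else 0 := by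
        rw [Finset.sum_comm]
        refine Finset.sum_congr rfl fun r _ => ?_
        rw [hLL r, ite_sum_zero]

end Aux4
section Aux5

variable {K : Type*} [Field K]

lemma train {S : Type*} [Fintype S] [DecidableEq S] {R : Type*} [CommRing R] :
    ∀ (m : ℕ) (Mf Nf : Fin m → Matrix S S R) (R0 : Matrix S S R),
      (∀ j, R0 * Mf j = Nf j * R0) →
      R0 * (List.ofFn Mf).prod = (List.ofFn Nf).prod * R0 := by
  intro m
  induction m with
  | zero => intro _ _ R0 _; simp
  | succ m ih =>
    intro Mf Nf R0 h
    rw [List.ofFn_succ, List.ofFn_succ, List.prod_cons, List.prod_cons,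
      ← Matrix.mul_assoc, h 0, Matrix.mul_assoc, ih _ _ _ (fun j => h j.succ),
      ← Matrix.mul_assoc]

lemma exchange (m : ℕ) (u w : K) (α : Fin m → K) :
    u • (RWm m u α * RWm m w α) = w • (RWm m w α * RWm m u α) := by
  ext v b
  have hR := train m (fun j => LLm u w (α j) (v j) (b j))
    (fun j => LLm w u (α j) (v j) (b j)) (Rmat u w)
    (fun j => RLL u w (α j) (v j) (b j))
  have h1 : (Rmat u w * (List.ofFn fun j => LLm u w (α j) (v j) (b j)).prod)
        (true, true) (false, false)
      = u * ((List.ofFn fun j => LLm u w (α j) (v j) (b j)).prod)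
        (true, true) (false, false) := by
    rw [Matrix.mul_apply, Fintype.sum_prod_type]
    simp [Rmat, Fintype.sum_bool]
  have h2 : ((List.ofFn fun j => LLm w u (α j) (v j) (b j)).prod * Rmat u w)
        (true, true) (false, false)
      = w * ((List.ofFn fun j => LLm w u (α j) (v j) (b j)).prod)
        (true, true) (false, false) := by
    rw [Matrix.mul_apply, Fintype.sum_prod_type]
    simp [Rmat, Fintype.sum_bool, mul_comm]
  rw [Matrix.smul_apply, Matrix.smul_apply, fusion, fusion, smul_eq_mul, smul_eq_mul,
    ← h1, hR, h2]

end Aux5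
section Aux6

variable {K : Type*} [Field K]

lemma swap_adjacent_prod {S : Type*} [Fintype S] [DecidableEq S] :
    ∀ (n : ℕ) (f : Fin (n + 1) → Matrix S S K) (k : Fin n) (c : K),
      f k.succ * f k.castSucc = c • (f k.castSucc * f k.succ) →
      (List.ofFn (f ∘ Equiv.swap k.castSucc k.succ)).prod = c • (List.ofFn f).prod := by
  intro n
  induction n with
  | zero => intro _ k; exact k.elim0
  | succ n ih =>
    intro f k c hc
    cases k using Fin.cases with
    | zero =>
      simp only [Fin.castSucc_zero, Fin.succ_zero_eq_one] at hc ⊢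
      have etail : ∀ i : Fin n, f (Equiv.swap (0 : Fin (n + 2)) 1 i.succ.succ) =
          f i.succ.succ := by
        intro i
        rw [Equiv.swap_apply_of_ne_of_ne (Fin.succ_ne_zero _)
          (by rw [← Fin.succ_zero_eq_one]
              exact fun h => Fin.succ_ne_zero _ (Fin.succ_injective _ h))]
      have e0 : f (Equiv.swap (0 : Fin (n + 2)) 1 0) = f 1 := by
        rw [Equiv.swap_apply_left]
      have e1 : f (Equiv.swap (0 : Fin (n + 2)) 1 (Fin.succ 0)) = f 0 := by
        rw [Fin.succ_zero_eq_one, Equiv.swap_apply_right]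
      simp only [List.ofFn_succ, List.prod_cons, Function.comp_apply, e0, e1, etail]
      rw [← Matrix.mul_assoc, hc, Matrix.smul_mul, Matrix.mul_assoc]
      rw [Fin.succ_zero_eq_one]
    | succ j =>
      set σ := Equiv.swap (Fin.castSucc j.succ) (Fin.succ j.succ) with hσ
      have h0 : f (σ 0) = f 0 := by
        rw [hσ, Equiv.swap_apply_of_ne_of_ne]
        · rw [← Fin.succ_castSucc]
          exact fun h => Fin.succ_ne_zero _ h.symm
        · exact fun h => Fin.succ_ne_zero _ h.symm
      have htail : ∀ i : Fin (n + 1), f (σ i.succ) =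
          ((fun i : Fin (n + 1) => f i.succ) ∘ Equiv.swap j.castSucc j.succ) i := by
        intro i
        simp only [Function.comp_apply]
        exact congrArg f (by
          rw [hσ, ← Fin.succ_castSucc]
          exact (Fin.succ_injective _).swap_apply j.castSucc j.succ i)
      have hg : (fun i : Fin (n + 1) => f i.succ) j.succ *
          (fun i : Fin (n + 1) => f i.succ) j.castSucc =
          c • ((fun i : Fin (n + 1) => f i.succ) j.castSucc *
            (fun i : Fin (n + 1) => f i.succ) j.succ) := by
        simp only []
        rw [Fin.succ_castSucc]
        exact hc
      have := ih (fun i : Fin (n + 1) => f i.succ) j c hg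
      rw [List.ofFn_succ (f := f ∘ σ), List.ofFn_succ (f := f), List.prod_cons, List.prod_cons]
      simp only [Function.comp_apply]
      rw [h0]
      rw [show (fun i : Fin (n + 1) => f (σ i.succ)) =
          ((fun i : Fin (n + 1) => f i.succ) ∘ Equiv.swap j.castSucc j.succ) from funext htail,
        this, Matrix.mul_smul]
end Aux6
section Final

variable {K : Type*} [Field K]

lemma prod_pow_swap_mul (n' : ℕ) (x : Fin (n' + 1) → K) (hx : ∀ i, x i ≠ 0) (k : Fin n') :
    (∏ j, x j ^ (n' - ((Equiv.swap k.castSucc k.succ j : Fin (n' + 1)) : ℕ))) *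
      (x k.castSucc / x k.succ) = ∏ j, x j ^ (n' - (j : ℕ)) := by
  have hkey : (∏ j, x j ^ (n' - ((Equiv.swap k.castSucc k.succ j : Fin (n' + 1)) : ℕ))) *
      x k.castSucc = (∏ j, x j ^ (n' - (j : ℕ))) * x k.succ := by
    rw [← Fintype.prod_ite_eq' k.castSucc x, ← Fintype.prod_ite_eq' k.succ x,
      ← Finset.prod_mul_distrib, ← Finset.prod_mul_distrib]
    refine Finset.prod_congr rfl fun j _ => ?_
    have hite : ∀ (a : Fin (n' + 1)), (if j = a then x j else 1) = x j ^ (if j = a then 1 else 0) := by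
      intro a; split <;> simp
    rw [hite, hite, ← pow_add, ← pow_add]
    congr 1
    have hkcs : ((k.castSucc : Fin (n' + 1)) : ℕ) = (k : ℕ) := Fin.coe_castSucc k
    have hks : ((k.succ : Fin (n' + 1)) : ℕ) = (k : ℕ) + 1 := Fin.val_succ k
    have hne : (k.castSucc : Fin (n' + 1)) ≠ k.succ := by
      intro h; have := congrArg (Fin.val) h; omega
    by_cases h1 : j = k.castSucc
    · subst h1
      rw [Equiv.swap_apply_left, if_pos rfl, if_neg hne]
      have : (k : ℕ) < n' := k.isLt
      omega
    · by_cases h2 : j = k.succ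
      · subst h2
        rw [Equiv.swap_apply_right, if_neg (Ne.symm hne), if_pos rfl]
        have : (k : ℕ) < n' := k.isLt
        omega
      · rw [Equiv.swap_apply_of_ne_of_ne h1 h2, if_neg h1, if_neg h2]
  have hs : x k.succ ≠ 0 := hx _
  rw [div_eq_mul_inv, ← mul_assoc, hkey, mul_assoc, mul_inv_cancel₀ hs, mul_one]

/-- invariance of the normalized matrix-product entry under any permutation. -/
lemma entry_invariant (n' m : ℕ) (α : Fin m → K) (s0 t0 : Fin m → Bool)
    (σ : Equiv.Perm (Fin (n' + 1))) (x : Fin (n' + 1) → K) (hx : ∀ i, x i ≠ 0) :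
    (∏ i, x (σ i) ^ (n' - (i : ℕ))) *
      ((List.ofFn fun i => RWm m (x (σ i)) α).prod) s0 t0 =
    (∏ i, x i ^ (n' - (i : ℕ))) * ((List.ofFn fun i => RWm m (x i) α).prod) s0 t0 := by
  have hσtop : σ ∈ Submonoid.closure
      (Set.range fun k : Fin n' => Equiv.swap k.castSucc k.succ) := by
    rw [Equiv.Perm.mclosure_swap_castSucc_succ]; trivial
  induction hσtop using Submonoid.closure_induction generalizing x with
  | mem τ hτ =>
    obtain ⟨k, rfl⟩ := hτ
    set τ := Equiv.swap k.castSucc k.succ with hτdef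
    -- the matrix-product part
    have hexch : (fun i => RWm m (x i) α) k.succ * (fun i => RWm m (x i) α) k.castSucc =
        ((x k.castSucc) / (x k.succ)) •
          ((fun i => RWm m (x i) α) k.castSucc * (fun i => RWm m (x i) α) k.succ) := by
      simp only []
      have hxc := exchange m (x k.castSucc) (x k.succ) α
      have hs : x k.succ ≠ 0 := hx _
      calc RWm m (x k.succ) α * RWm m (x k.castSucc) α
          = (x k.succ)⁻¹ • ((x k.succ) • (RWm m (x k.succ) α * RWm m (x k.castSucc) α)) := by
            rw [smul_smul, inv_mul_cancel₀ hs, one_smul]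
        _ = (x k.succ)⁻¹ • ((x k.castSucc) • (RWm m (x k.castSucc) α * RWm m (x k.succ) α)) := by
            rw [← hxc]
        _ = ((x k.castSucc) / (x k.succ)) •
              (RWm m (x k.castSucc) α * RWm m (x k.succ) α) := by
            rw [smul_smul, div_eq_mul_inv, mul_comm]
    have hprod := swap_adjacent_prod n' (fun i => RWm m (x i) α) k
      ((x k.castSucc) / (x k.succ)) hexch
    have hlist : (List.ofFn fun i => RWm m (x (τ i)) α) =
        List.ofFn ((fun i => RWm m (x i) α) ∘ τ) := rfl
    rw [hlist, hprod, Matrix.smul_apply, smul_eq_mul]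
    -- the scalar part
    have hpow : (∏ i, x (τ i) ^ (n' - (i : ℕ))) =
        ∏ j, x j ^ (n' - ((τ.symm j : Fin (n' + 1)) : ℕ)) :=
      Fintype.prod_equiv τ _ _ (fun i => by rw [Equiv.symm_apply_apply])
    have hsymm : τ.symm = τ := by rw [hτdef, Equiv.symm_swap]
    rw [hpow, hsymm, ← mul_assoc, prod_pow_swap_mul n' x hx k]
  | one =>
    simp
  | mul τ ρ hτ hρ ihτ ihρ =>
    have h1 : ∀ i, (x ∘ τ) ((ρ : Equiv.Perm (Fin (n' + 1))) i) = x ((τ * ρ) i) := fun i => rfl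
    have step1 := ihρ (x ∘ τ) (fun i => hx _)
    have step2 := ihτ x hx
    calc (∏ i, x ((τ * ρ) i) ^ (n' - (i : ℕ))) *
          ((List.ofFn fun i => RWm m (x ((τ * ρ) i)) α).prod) s0 t0
        = (∏ i, (x ∘ τ) (ρ i) ^ (n' - (i : ℕ))) *
          ((List.ofFn fun i => RWm m ((x ∘ τ) (ρ i)) α).prod) s0 t0 := rfl
      _ = (∏ i, (x ∘ τ) i ^ (n' - (i : ℕ))) *
          ((List.ofFn fun i => RWm m ((x ∘ τ) i) α).prod) s0 t0 := step1 ▸ step1 ▸ step1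
      _ = (∏ i, x i ^ (n' - (i : ℕ))) *
          ((List.ofFn fun i => RWm m (x i) α).prod) s0 t0 := step2

end Final

/-- the normalized partition function `x^{-δ}·Z_λ(x|a)`, with
`x^δ = x_1^0 x_2^1 ⋯ x_n^{n-1}`, is symmetric in `x_1, …, x_n`. -/
theorem stmt9 {K : Type*} [Field K] (n : ℕ) (hn : 0 < n)
    (lam : Fin n → ℕ) (hlam : Antitone lam)
    (x : Fin n → K) (a : ℤ → K) (hx : ∀ i, x i ≠ 0) (ha : ∀ k, a k ≠ 0)
    (σ : Equiv.Perm (Fin n)) :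
    (∏ i : Fin n, (x ∘ σ) i ^ (i : ℕ))⁻¹ * ZPF n (n + lam ⟨0, hn⟩) lam (x ∘ σ) a =
      (∏ i : Fin n, x i ^ (i : ℕ))⁻¹ * ZPF n (n + lam ⟨0, hn⟩) lam x a := by
  obtain ⟨n', rfl⟩ : ∃ k, n = k + 1 := ⟨n - 1, by omega⟩
  rw [ZPF_eq, ZPF_eq]
  set m := n' + 1 + lam ⟨0, hn⟩ with hm
  set α : Fin m → K := fun j => a ((j : ℤ) + 1) with hα
  set s0 : Fin m → Bool :=
    fun j => decide (∀ i : Fin (n' + 1), (j : ℕ) + 1 ≠ lam i + (n' + 1 - (i : ℕ))) with hs0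
  set t0 : Fin m → Bool := fun _ => true with ht0
  have key := entry_invariant n' m α s0 t0 σ x hx
  have hgen : ∀ (y : Fin (n' + 1) → K), (∀ i, y i ≠ 0) →
      (∏ i, y i ^ (i : ℕ))⁻¹ * ((List.ofFn fun i => RWm m (y i) α).prod) s0 t0 =
      ((∏ i, y i) ^ n')⁻¹ *
        ((∏ i, y i ^ (n' - (i : ℕ))) * ((List.ofFn fun i => RWm m (y i) α).prod) s0 t0) := by
    intro y hy
    have hsplit : (∏ i, y i ^ (i : ℕ)) * (∏ i, y i ^ (n' - (i : ℕ))) = (∏ i, y i) ^ n' := by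
      rw [← Finset.prod_mul_distrib, ← Finset.prod_pow]
      refine Finset.prod_congr rfl fun i _ => ?_
      rw [← pow_add]
      congr 1
      have := i.isLt
      omega
    have h2 : (∏ i, y i ^ (n' - (i : ℕ))) ≠ 0 :=
      Finset.prod_ne_zero_iff.mpr fun i _ => pow_ne_zero _ (hy i)
    rw [← hsplit, mul_inv, mul_assoc, inv_mul_cancel_left₀ h2]
  have hxσ : ∀ i, (x ∘ σ) i ≠ 0 := fun i => hx _
  have hgenσ := hgen (x ∘ σ) hxσ
  simp only [Function.comp_apply] at hgenσ ⊢
  rw [hgenσ, hgen x hx]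
  rw [show (∏ i, x (σ i)) = ∏ i, x i from Equiv.prod_comp σ x]
  exact congrArg (fun z => ((∏ i, x i) ^ n')⁻¹ * z) key
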